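/- Let N be a squarefree positive integer with N ≡ 1 (mod 4), and let p be an odd prime not dividing N such that the Legendre symbol (-N/p) = -1. Then (-p/q) = 1 for every prime q dividing N if and only if p ≡ 3 (mod 4) and (q/p) = 1 for every prime q dividing N. -/

import Mathlib

open ZMod

private lemma legendreSym_prod (p : ℕ) [Fact p.Prime] (s : Finset ℕ) :
    legendreSym p (∏ q ∈ s, (q : ℤ)) = ∏ q ∈ s, legendreSym p (q : ℤ) := by
  classical
  induction s using Finset.induction with
  | empty => simp [legendreSym.at_one]
  | insert _ _ h ih =>
      rw [Finset.prod_insert h, Finset.prod_insert h, legendreSym.mul, ih]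

/-- key computation when `p % 4 = 3`. -/
private lemma key3 (p q : ℕ) [Fact p.Prime] [Fact q.Prime] (hp4 : p % 4 = 3)
    (hq2 : q ≠ 2) : legendreSym q (-(p : ℤ)) = legendreSym p (q : ℤ) := by
  have h1 : legendreSym q (-(p : ℤ)) = legendreSym q (-1) * legendreSym q (p : ℤ) := by
    rw [← legendreSym.mul]; ring_nf
  rw [h1, legendreSym.at_neg_one hq2]
  have hq1 : q % 2 = 1 := (Fact.out : q.Prime).eq_two_or_odd.resolve_left hq2
  have : q % 4 = 1 ∨ q % 4 = 3 := Nat.odd_mod_four_iff.mp hq1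
  rcases this with h | h
  · rw [χ₄_nat_one_mod_four h, one_mul,
      legendreSym.quadratic_reciprocity_one_mod_four h
        ((Nat.Prime.mod_two_eq_one_iff_ne_two Fact.out).mp
          (Nat.odd_of_mod_four_eq_three hp4))]
  · rw [χ₄_nat_three_mod_four h,
      legendreSym.quadratic_reciprocity_three_mod_four hp4 h]
    ring

/-- key computation when `p % 4 = 1`. -/
private lemma key1 (p q : ℕ) [Fact p.Prime] [Fact q.Prime] (hp4 : p % 4 = 1)
    (hq2 : q ≠ 2) : legendreSym q (-(p : ℤ)) = χ₄ q * legendreSym p (q : ℤ) := by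
  have h1 : legendreSym q (-(p : ℤ)) = legendreSym q (-1) * legendreSym q (p : ℤ) := by
    rw [← legendreSym.mul]; ring_nf
  rw [h1, legendreSym.at_neg_one hq2,
    legendreSym.quadratic_reciprocity_one_mod_four hp4 hq2]

/-- Let `N` be a squarefree positive integer with `N ≡ 1 (mod 4)`, and let `p` be an odd prime
not dividing `N` such that the Legendre symbol `(-N/p) = -1`. Then `(-p/q) = 1` for every
prime `q` dividing `N` if and only if `p ≡ 3 (mod 4)` and `(q/p) = 1` for every prime `q`
dividing `N`. -/
theorem neg_p_residue_iff_p_three_mod_four (N p : ℕ) [Fact p.Prime] (hp2 : p % 2 = 1)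
    (hN : Squarefree N) (hNpos : 0 < N) (hN4 : N % 4 = 1) (hpN : ¬ p ∣ N)
    (hleg : legendreSym p (-(N : ℤ)) = -1) :
    (∀ q : ℕ, ∀ hq : q.Prime, q ∣ N → @legendreSym q ⟨hq⟩ (-(p : ℤ)) = 1) ↔
      (p % 4 = 3 ∧ ∀ q : ℕ, q.Prime → q ∣ N → legendreSym p (q : ℤ) = 1) := by
  classical
  have hNodd : N % 2 = 1 := by omega
  have hq2 : ∀ q : ℕ, q ∣ N → q ≠ 2 := by
    intro q hqN h2
    subst h2
    omega
  set s := N.primeFactors with hs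
  have hprod : ∏ q ∈ s, q = N := Nat.prod_primeFactors_of_squarefree hN
  have hNcast : (N : ℤ) = ∏ q ∈ s, (q : ℤ) := by
    rw [← hprod]; push_cast; ring
  have hlegN : legendreSym p (-(N : ℤ)) =
      χ₄ p * ∏ q ∈ s, legendreSym p (q : ℤ) := by
    have : (-(N : ℤ)) = (-1) * (N : ℤ) := by ring
    rw [this, legendreSym.mul, hNcast, legendreSym_prod,
      legendreSym.at_neg_one ((Nat.Prime.mod_two_eq_one_iff_ne_two Fact.out).mp hp2)]
  have hmem : ∀ q ∈ s, q.Prime ∧ q ∣ N := fun q hq =>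
    ⟨Nat.prime_of_mem_primeFactors hq, Nat.dvd_of_mem_primeFactors hq⟩
  constructor
  · intro H
    have hp4 : p % 4 = 3 := by
      by_contra hne
      have hp41 : p % 4 = 1 := by omega
      have heach : ∀ q ∈ s, legendreSym p (q : ℤ) = χ₄ q := by
        intro q hq
        obtain ⟨hqP, hqN⟩ := hmem q hq
        haveI := Fact.mk hqP
        have hk := key1 p q hp41 (hq2 q hqN)
        have hH : legendreSym q (-(p : ℤ)) = 1 := H q hqP hqN
        rw [hH] at hk
        have hχ : χ₄ q * χ₄ q = 1 := by
          have hq1 : q % 2 = 1 := hqP.eq_two_or_odd.resolve_left (hq2 q hqN)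
          rcases Nat.odd_mod_four_iff.mp hq1 with h | h
          · rw [χ₄_nat_one_mod_four h]; ring
          · rw [χ₄_nat_three_mod_four h]; ring
        calc legendreSym p (q : ℤ) = χ₄ q * χ₄ q * legendreSym p (q : ℤ) := by
              rw [hχ, one_mul]
          _ = χ₄ q * (χ₄ q * legendreSym p (q : ℤ)) := by ring
          _ = χ₄ q := by rw [← hk, mul_one]
      have hprodχ : ∏ q ∈ s, legendreSym p (q : ℤ) = 1 := by
        rw [Finset.prod_congr rfl heach]
        have : ∏ q ∈ s, χ₄ (q : ZMod 4) = χ₄ ((N : ℕ) : ZMod 4) := by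
          rw [← hprod]; push_cast [← map_prod]; rfl
        rw [this, χ₄_nat_one_mod_four hN4]
      rw [hlegN, hprodχ, χ₄_nat_one_mod_four hp41, one_mul] at hleg
      norm_num at hleg
    refine ⟨hp4, fun q hqP hqN => ?_⟩
    haveI := Fact.mk hqP
    rw [← key3 p q hp4 (hq2 q hqN)]
    exact H q hqP hqN
  · rintro ⟨hp4, H⟩ q hqP hqN
    haveI := Fact.mk hqP
    rw [key3 p q hp4 (hq2 q hqN)]
    exact H q hqP hqN
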